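/- The following rules are admissible in GAMALL: if the sequent A ⇒ B is derivable, then so are the sequents ⇒ ◇(A ⊸ □B) and ⇒ ◇(◇A ⊸ B). -/

import Mathlib

/-- Formulas of MALL: atoms, constants 0, 1, ⊥, ⊤, negation, tensor ⊗,
par ⊕, additive conjunction ∧ and additive disjunction ∨. -/
inductive MF : Type
  | atom : Nat → MF
  | zero : MF
  | one : MF
  | bot : MF
  | top : MF
  | neg : MF → MF
  | tensor : MF → MF → MF
  | par : MF → MF → MF
  | conj : MF → MF → MF
  | disj : MF → MF → MF

/-- Linear implication A ⊸ B := ¬A ⊕ B. -/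
def MF.imp (A B : MF) : MF := MF.par (MF.neg A) B

/-- Tarskian possibility ◇A := ¬A ⊸ A. -/
def MF.diam (A : MF) : MF := MF.imp (MF.neg A) A

/-- Tarskian necessity □A := ¬◇¬A. -/
def MF.box (A : MF) : MF := MF.neg (MF.diam (MF.neg A))

/-- `Deriv W M C Γ Δ` : the sequent Γ ⇒ Δ (Γ, Δ finite multisets) is derivable
in GMALL extended by weakening (if `W`), mingle (if `M`), contraction (if `C`). -/
inductive Deriv (W M C : Prop) : Multiset MF → Multiset MF → Prop
  | id (A : MF) : Deriv W M C {A} {A}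
  | l0 : Deriv W M C {MF.zero} 0
  | r0 {Γ Δ} : Deriv W M C Γ Δ → Deriv W M C Γ (MF.zero ::ₘ Δ)
  | l1 {Γ Δ} : Deriv W M C Γ Δ → Deriv W M C (MF.one ::ₘ Γ) Δ
  | r1 : Deriv W M C 0 {MF.one}
  | lbot {Γ Δ} : Deriv W M C (MF.bot ::ₘ Γ) Δ
  | rtop {Γ Δ} : Deriv W M C Γ (MF.top ::ₘ Δ)
  | ltensor {A B Γ Δ} : Deriv W M C (A ::ₘ B ::ₘ Γ) Δ →
      Deriv W M C (MF.tensor A B ::ₘ Γ) Δ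
  | rtensor {A B Γ Γ' Δ Δ'} : Deriv W M C Γ (A ::ₘ Δ) → Deriv W M C Γ' (B ::ₘ Δ') →
      Deriv W M C (Γ + Γ') (MF.tensor A B ::ₘ (Δ + Δ'))
  | lpar {A B Γ Γ' Δ Δ'} : Deriv W M C (A ::ₘ Γ) Δ → Deriv W M C (B ::ₘ Γ') Δ' →
      Deriv W M C (MF.par A B ::ₘ (Γ + Γ')) (Δ + Δ')
  | rpar {A B Γ Δ} : Deriv W M C Γ (A ::ₘ B ::ₘ Δ) →
      Deriv W M C Γ (MF.par A B ::ₘ Δ)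
  | lconj1 {A B Γ Δ} : Deriv W M C (A ::ₘ Γ) Δ → Deriv W M C (MF.conj A B ::ₘ Γ) Δ
  | lconj2 {A B Γ Δ} : Deriv W M C (B ::ₘ Γ) Δ → Deriv W M C (MF.conj A B ::ₘ Γ) Δ
  | rconj {A B Γ Δ} : Deriv W M C Γ (A ::ₘ Δ) → Deriv W M C Γ (B ::ₘ Δ) →
      Deriv W M C Γ (MF.conj A B ::ₘ Δ)
  | ldisj {A B Γ Δ} : Deriv W M C (A ::ₘ Γ) Δ → Deriv W M C (B ::ₘ Γ) Δ →
      Deriv W M C (MF.disj A B ::ₘ Γ) Δ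
  | rdisj1 {A B Γ Δ} : Deriv W M C Γ (A ::ₘ Δ) → Deriv W M C Γ (MF.disj A B ::ₘ Δ)
  | rdisj2 {A B Γ Δ} : Deriv W M C Γ (B ::ₘ Δ) → Deriv W M C Γ (MF.disj A B ::ₘ Δ)
  | lneg {A Γ Δ} : Deriv W M C Γ (A ::ₘ Δ) → Deriv W M C (MF.neg A ::ₘ Γ) Δ
  | rneg {A Γ Δ} : Deriv W M C (A ::ₘ Γ) Δ → Deriv W M C Γ (MF.neg A ::ₘ Δ)
  | limp {A B Γ Γ' Δ Δ'} : Deriv W M C Γ (A ::ₘ Δ) → Deriv W M C (B ::ₘ Γ') Δ' →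
      Deriv W M C (MF.imp A B ::ₘ (Γ + Γ')) (Δ + Δ')
  | rimp {A B Γ Δ} : Deriv W M C (A ::ₘ Γ) (B ::ₘ Δ) →
      Deriv W M C Γ (MF.imp A B ::ₘ Δ)
  | lw {A Γ Δ} : W → Deriv W M C Γ Δ → Deriv W M C (A ::ₘ Γ) Δ
  | rw {A Γ Δ} : W → Deriv W M C Γ Δ → Deriv W M C Γ (A ::ₘ Δ)
  | mingle {Γ Γ' Δ Δ'} : M → Deriv W M C Γ Δ → Deriv W M C Γ' Δ' →
      Deriv W M C (Γ + Γ') (Δ + Δ')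
  | lc {A Γ Δ} : C → Deriv W M C (A ::ₘ A ::ₘ Γ) Δ → Deriv W M C (A ::ₘ Γ) Δ
  | rc {A Γ Δ} : C → Deriv W M C Γ (A ::ₘ A ::ₘ Δ) → Deriv W M C Γ (A ::ₘ Δ)

/-- GMALL : no extra structural rules. -/
def GMALL : Multiset MF → Multiset MF → Prop := Deriv False False False

/-- GMALL + the mingle rule M. -/
def GMALLM : Multiset MF → Multiset MF → Prop := Deriv False True False

/-- GAMALL : GMALL + weakening. -/
def GAMALL : Multiset MF → Multiset MF → Prop := Deriv True False False

/-- GSLL : GMALL + contraction. -/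
def GSLL : Multiset MF → Multiset MF → Prop := Deriv False False True

/-- The rules R◇R□ and R◇L◇ are admissible in GAMALL. -/
theorem gamall_derived_rules (A B : MF) (h : GAMALL {A} {B}) :
    GAMALL 0 {(A.imp B.box).diam} ∧ GAMALL 0 {((A.diam).imp B).diam} := by
  unfold GAMALL at *
  have h' : Deriv True False False {A} (B ::ₘ 0) := h
  constructor
  · -- d1 : ¬B, A ⇒
    have d1 : Deriv True False False (B.neg ::ₘ {A}) 0 := Deriv.lneg h'
    have d2 : Deriv True False False {A} (B.neg.neg ::ₘ 0) := Deriv.rneg d1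
    have d3 : Deriv True False False (B.neg ::ₘ {A}) (B.box ::ₘ 0) := Deriv.rw trivial d1
    have d4 := Deriv.limp d2 d3
    have d4' : Deriv True False False ((B.neg).diam ::ₘ A ::ₘ {A}) {B.box} := by
      simpa [MF.diam] using d4
    have d5 : Deriv True False False (A ::ₘ {A}) (B.box ::ₘ {B.box}) := Deriv.rneg d4'
    have d6 : Deriv True False False {A} ((A.imp B.box) ::ₘ {B.box}) := Deriv.rimp d5
    have d6' : Deriv True False False (A ::ₘ 0) (B.box ::ₘ {A.imp B.box}) := by
      convert d6 using 1
      · rfl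
      exact Multiset.cons_swap _ _ _
    have d7 : Deriv True False False 0 ((A.imp B.box) ::ₘ {A.imp B.box}) := Deriv.rimp d6'
    have d8 : Deriv True False False ((A.imp B.box).neg ::ₘ 0) {A.imp B.box} := Deriv.lneg d7
    exact Deriv.rimp d8
  · have e1 : Deriv True False False 0 (A.neg ::ₘ {B}) := Deriv.rneg h'
    have e2 : Deriv True False False {A.diam} (A.neg ::ₘ {B}) := Deriv.lw trivial e1
    have e3 := Deriv.limp e2 (h' : Deriv True False False (A ::ₘ 0) {B})
    have e3' : Deriv True False False (A.diam ::ₘ A.diam ::ₘ 0) (B ::ₘ {B}) := by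
      simpa [MF.diam] using e3
    have e4 : Deriv True False False {A.diam} ((A.diam.imp B) ::ₘ {B}) := Deriv.rimp e3'
    have e4' : Deriv True False False (A.diam ::ₘ 0) (B ::ₘ {A.diam.imp B}) := by
      convert e4 using 1
      · rfl
      exact Multiset.cons_swap _ _ _
    have e5 : Deriv True False False 0 ((A.diam.imp B) ::ₘ {A.diam.imp B}) := Deriv.rimp e4'
    have e6 : Deriv True False False ((A.diam.imp B).neg ::ₘ 0) {A.diam.imp B} := Deriv.lneg e5
    exact Deriv.rimp e6
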